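/- Let L be an aperiodic, uniformly recurrent language on alphabet 𝒜 satisfying an ℱ-flipped order condition (ℱ ⊆ 𝒜). If T is a standard ℱ-flipped interval exchange transformation with natural coding L(T) = L, then T is minimal. -/

import Mathlib

open List Set

variable {A : Type*}

/-- A (factorial, extendable) language over an alphabet `A`. -/
def IsLanguage (L : Set (List A)) : Prop :=
  (∀ w ∈ L, ∀ v : List A, v <:+: w → v ∈ L) ∧
  (∀ w ∈ L, ∃ a : A, a :: w ∈ L) ∧
  (∀ w ∈ L, ∃ a : A, w ++ [a] ∈ L)

/-- Arrival set `A(w)`. -/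
def arrSet (L : Set (List A)) (w : List A) : Set A := {a | a :: w ∈ L}

/-- Departure set `D(w)`. -/
def depSet (L : Set (List A)) (w : List A) : Set A := {a | w ++ [a] ∈ L}

def Bispecial (L : Set (List A)) (w : List A) : Prop :=
  1 < (arrSet L w).ncard ∧ 1 < (depSet L w).ncard

/-- `m(w) = #{awb ∈ L}`. -/
noncomputable def extCount (L : Set (List A)) (w : List A) : ℕ :=
  {p : A × A | p.1 :: (w ++ [p.2]) ∈ L}.ncard

def StrongBispecial (L : Set (List A)) (w : List A) : Prop :=
  Bispecial L w ∧ (arrSet L w).ncard + (depSet L w).ncard - 1 < extCount L w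

def WeakBispecial (L : Set (List A)) (w : List A) : Prop :=
  Bispecial L w ∧ extCount L w < (arrSet L w).ncard + (depSet L w).ncard - 1

def LocallyStrongBispecial (L : Set (List A)) (w : List A) : Prop :=
  Bispecial L w ∧ ∃ A' D' : Set A, A'.Nonempty ∧ D'.Nonempty ∧
    A' ⊆ arrSet L w ∧ D' ⊆ depSet L w ∧
    A'.ncard + D'.ncard - 1 <
      {p : A × A | p.1 ∈ A' ∧ p.2 ∈ D' ∧ p.1 :: (w ++ [p.2]) ∈ L}.ncard

/-- The order condition at a single bispecial word, for orders `rA`, `rD`. -/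
def OrderConditionAt (L : Set (List A)) (w : List A) (rA rD : A → A → Prop) : Prop :=
  ∀ a b c d : A, a ≠ b → c ≠ d →
    a :: (w ++ [c]) ∈ L → b :: (w ++ [d]) ∈ L → (rA a b ↔ rD c d)

/-- The local order condition. -/
def LocalOrderCondition (L : Set (List A)) : Prop :=
  ∀ w : List A, Bispecial L w → ∃ rA rD : A → A → Prop,
    IsStrictTotalOrder A rA ∧ IsStrictTotalOrder A rD ∧ OrderConditionAt L w rA rD

/-- `a` and `a'` are consecutive in the strict order `r`. -/
def ConsecutiveIn (r : A → A → Prop) (a a' : A) : Prop :=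
  r a a' ∧ ∀ c : A, ¬ (r a c ∧ r c a')

/-- A connection for the bispecial word `w`, with respect to orders `rA`, `rD`. -/
def ConnectionWith (L : Set (List A)) (w : List A) (rA rD : A → A → Prop) : Prop :=
  ∃ a a' b b' : A, ConsecutiveIn rA a a' ∧ ConsecutiveIn rD b b' ∧
    a :: (w ++ [b]) ∈ L ∧ a' :: (w ++ [b']) ∈ L ∧
    a :: (w ++ [b']) ∉ L ∧ a' :: (w ++ [b]) ∉ L

/-- `w` has a connection (for some orders realizing the order condition at `w`). -/
def HasConnection (L : Set (List A)) (w : List A) : Prop :=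
  ∃ rA rD : A → A → Prop, IsStrictTotalOrder A rA ∧ IsStrictTotalOrder A rD ∧
    OrderConditionAt L w rA rD ∧ ConnectionWith L w rA rD

/-- Complexity function `p(n)`. -/
noncomputable def complexityFn (L : Set (List A)) (n : ℕ) : ℕ :=
  {w ∈ L | w.length = n}.ncard

def UniformlyRecurrent (L : Set (List A)) : Prop :=
  ∀ v ∈ L, ∃ n : ℕ, ∀ u ∈ L, u.length = n → v <:+: u

def LangRecurrent (L : Set (List A)) : Prop :=
  ∀ v ∈ L, ∃ u : List A, u ≠ [] ∧ v ++ u ∈ L ∧ v <:+ v ++ u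

def LangAperiodic (L : Set (List A)) : Prop :=
  ∀ w ∈ L, w ≠ [] → ∃ n : ℕ, (List.replicate n w).flatten ∉ L

def LeftSpecial (L : Set (List A)) (w : List A) : Prop := 1 < (arrSet L w).ncard

def RightSpecial (L : Set (List A)) (w : List A) : Prop := 1 < (depSet L w).ncard

/-- The two-sided subshift associated to `L`. -/
def XL (L : Set (List A)) : Set (ℤ → A) :=
  {x | ∀ (m : ℤ) (n : ℕ), (List.ofFn fun i : Fin n => x (m + (i : ℕ))) ∈ L}

def occursAtZ (x : ℤ → A) (m : ℤ) (w : List A) : Prop :=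
  (List.ofFn fun i : Fin w.length => x (m + (i : ℕ))) = w

def FactorsZ (x : ℤ → A) : Set (List A) := {w | ∃ m : ℤ, occursAtZ x m w}

def RightRec (x : ℤ → A) : Prop :=
  ∀ w ∈ FactorsZ x, ∀ N : ℤ, ∃ m : ℤ, N ≤ m ∧ occursAtZ x m w

def LeftRec (x : ℤ → A) : Prop :=
  ∀ w ∈ FactorsZ x, ∀ N : ℤ, ∃ m : ℤ, m ≤ N ∧ occursAtZ x m w

def RecurrentZ (x : ℤ → A) : Prop := RightRec x ∧ LeftRec x

/-- The `F`-flipped order condition, with orders `rA` (arrival) and `rD` (departure):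
the departure order is reversed when the number of `F`-letters of `w` is odd. -/
def FlippedOC [DecidableEq A] (L : Set (List A)) (F : Finset A)
    (rA rD : A → A → Prop) : Prop :=
  ∀ w : List A, Bispecial L w → ∀ a b c d : A, a ≠ b → c ≠ d →
    a :: (w ++ [c]) ∈ L → b :: (w ++ [d]) ∈ L →
    (rA a b ↔ if Even (w.countP fun e => decide (e ∈ F)) then rD c d else rD d c)

/-- A generalized `F`-flipped interval exchange transformation. -/
structure GIET (A : Type*) (F : Finset A) where
  l : A → ℝ
  r : A → ℝ
  T : ℝ → ℝ
  lt : ∀ e, l e < r e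
  sub : ∀ e, Set.Ioo (l e) (r e) ⊆ Set.Ioo (0 : ℝ) 1
  disj : ∀ e f, e ≠ f → Disjoint (Set.Ioo (l e) (r e)) (Set.Ioo (l f) (r f))
  cover : Set.Icc (0 : ℝ) 1 = ⋃ e, Set.Icc (l e) (r e)
  cont : ∀ e, ContinuousOn T (Set.Ioo (l e) (r e))
  inc : ∀ e ∉ F, StrictMonoOn T (Set.Ioo (l e) (r e))
  dec : ∀ e ∈ F, StrictAntiOn T (Set.Ioo (l e) (r e))
  l' : A → ℝ
  r' : A → ℝ
  lt' : ∀ e, l' e < r' e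
  img : ∀ e, T '' Set.Ioo (l e) (r e) = Set.Ioo (l' e) (r' e)
  disj' : ∀ e f, e ≠ f → Disjoint (Set.Ioo (l' e) (r' e)) (Set.Ioo (l' f) (r' f))
  cover' : Set.Icc (0 : ℝ) 1 = ⋃ e, Set.Icc (l' e) (r' e)

variable {F : Finset A}

/-- A bi-infinite orbit of `G`, with symbolic itinerary `u`. -/
def GIET.IsOrbit (G : GIET A F) (u : ℤ → A) (p : ℤ → ℝ) : Prop :=
  (∀ n : ℤ, G.T (p n) = p (n + 1)) ∧
  ∀ n : ℤ, p n ∈ Set.Ioo (G.l (u n)) (G.r (u n))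

/-- The natural coding `L(T)`: the language generated by all trajectories. -/
def GIET.lang (G : GIET A F) : Set (List A) :=
  {w | ∃ (u : ℤ → A) (p : ℤ → ℝ), G.IsOrbit u p ∧
    ∃ m : ℤ, (List.ofFn fun i : Fin w.length => u (m + (i : ℕ))) = w}


section Aux

variable {F : Finset A}

/-- window word of the itinerary `u` starting at `m`, length `n` -/
def win (u : ℤ → A) (m : ℤ) (n : ℕ) : List A :=
  List.ofFn fun i : Fin n => u (m + (i : ℕ))

@[simp] lemma win_length (u : ℤ → A) (m : ℤ) (n : ℕ) : (win u m n).length = n :=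
  List.length_ofFn

lemma win_getElem (u : ℤ → A) (m : ℤ) (n : ℕ) (i : ℕ) (h : i < (win u m n).length) :
    (win u m n)[i] = u (m + i) := by
  simp [win]

lemma win_add (u : ℤ → A) (m : ℤ) (a b : ℕ) :
    win u m (a + b) = win u m a ++ win u (m + a) b := by
  apply List.ext_getElem (by simp)
  intro i h1 h2
  simp only [win_length] at h1
  rw [win_getElem]
  rcases lt_or_ge i a with hi | hi
  · rw [List.getElem_append_left (by simpa using hi), win_getElem]
  · rw [List.getElem_append_right (by simpa using hi), win_getElem]
    simp only [win_length]
    congr 1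
    push_cast [Nat.cast_sub hi]
    ring

lemma win_pow (u : ℤ → A) (a : ℤ) (d : ℕ) (hper : ∀ j : ℕ, u (a + d + j) = u (a + j)) :
    ∀ k : ℕ, win u a (k * d) = (List.replicate k (win u a d)).flatten := by
  intro k
  induction k with
  | zero => simp [win]
  | succ k ih =>
    have h1 : (k + 1) * d = d + k * d := by ring
    rw [h1, win_add, List.replicate_succ, List.flatten_cons, ← ih]
    congr 1
    apply List.ext_getElem (by simp)
    intro i h1 h2
    rw [win_getElem, win_getElem]
    exact hper i

lemma win_infix {u : ℤ → A} {m : ℤ} {n : ℕ} {v : List A} (h : v <:+: win u m n) :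
    ∃ s : ℕ, v = win u (m + s) v.length := by
  obtain ⟨s, t, hst⟩ := h
  refine ⟨s.length, ?_⟩
  apply List.ext_getElem (by simp)
  intro i h1 h2
  have hb : s.length + i < (s ++ v).length := by simp; omega
  have key : (s ++ v ++ t)[s.length + i]'(by simp; omega) = v[i] := by
    rw [List.getElem_append_left hb, List.getElem_append_right (by simp)]
    congr 1
    omega
  rw [win_getElem]
  rw [← key, List.getElem_of_eq hst, win_getElem]
  congr 1
  push_cast
  ring


lemma affine_mem_uIcc {s c x x' z : ℝ} (hs : s = 1 ∨ s = -1) (hz : z ∈ Set.uIcc x x') :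
    s * z + c ∈ Set.uIcc (s * x + c) (s * x' + c) := by
  rcases hs with rfl | rfl <;> rw [Set.mem_uIcc] at hz ⊢ <;>
    rcases hz with ⟨h1, h2⟩ | ⟨h1, h2⟩ <;>
    first
      | exact Or.inl ⟨by linarith, by linarith⟩
      | exact Or.inr ⟨by linarith, by linarith⟩

lemma affine_surj {s c x x' : ℝ} (hs : s = 1 ∨ s = -1) {w : ℝ}
    (hw : w ∈ Set.uIcc (s * x + c) (s * x' + c)) :
    ∃ z ∈ Set.uIcc x x', s * z + c = w := by
  refine ⟨s * (w - c), ?_, by rcases hs with rfl | rfl <;> ring⟩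
  rcases hs with rfl | rfl <;> rw [Set.mem_uIcc] at hw ⊢ <;>
    rcases hw with ⟨h1, h2⟩ | ⟨h1, h2⟩ <;>
    first
      | exact Or.inl ⟨by linarith, by linarith⟩
      | exact Or.inr ⟨by linarith, by linarith⟩

/-- Whether a point follows a finite word under the dynamics of `G`. -/
def Follows (G : GIET A F) (x : ℝ) (w : List A) : Prop :=
  ∀ (i : ℕ) (h : i < w.length), G.T^[i] x ∈ Set.Ioo (G.l w[i]) (G.r w[i])

variable {G : GIET A F}

lemma step_affine [DecidableEq A]
    (hstd : ∀ e, ∃ c : ℝ, ∀ x ∈ Set.Ioo (G.l e) (G.r e),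
      G.T x = (if e ∈ F then -x else x) + c) (e : A) :
    ∃ s c : ℝ, (s = 1 ∨ s = -1) ∧
      ∀ x ∈ Set.Ioo (G.l e) (G.r e), G.T x = s * x + c := by
  obtain ⟨c, hc⟩ := hstd e
  by_cases he : e ∈ F
  · exact ⟨-1, c, Or.inr rfl, fun x hx => by rw [hc x hx, if_pos he]; ring⟩
  · exact ⟨1, c, Or.inl rfl, fun x hx => by rw [hc x hx, if_neg he]; ring⟩

lemma iter_affine [DecidableEq A]
    (hstd : ∀ e, ∃ c : ℝ, ∀ x ∈ Set.Ioo (G.l e) (G.r e),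
      G.T x = (if e ∈ F then -x else x) + c)
    {x x' : ℝ} {w : List A} (hx : Follows G x w) (hx' : Follows G x' w) :
    ∀ t, t ≤ w.length → ∃ s c : ℝ, (s = 1 ∨ s = -1) ∧
      ∀ z ∈ Set.uIcc x x', G.T^[t] z = s * z + c := by
  intro t
  induction t with
  | zero => exact fun _ => ⟨1, 0, Or.inl rfl, fun z _ => by simp⟩
  | succ t ih =>
    intro ht
    have ht' : t < w.length := ht
    obtain ⟨s, c, hs, hf⟩ := ih ht'.le
    obtain ⟨s₂, c₂, hs₂, hf₂⟩ := step_affine hstd w[t]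
    refine ⟨s₂ * s, s₂ * c + c₂, ?_, fun z hz => ?_⟩
    · rcases hs with rfl | rfl <;> rcases hs₂ with rfl | rfl <;> norm_num
    · have hmem : G.T^[t] z ∈ Set.Ioo (G.l w[t]) (G.r w[t]) := by
        have h1 := affine_mem_uIcc (c := c) hs hz
        rw [← hf x Set.left_mem_uIcc, ← hf x' Set.right_mem_uIcc, ← hf z hz] at h1
        exact Set.ordConnected_Ioo.uIcc_subset (hx t ht') (hx' t ht') h1
      rw [Function.iterate_succ_apply', hf₂ _ hmem, hf z hz]
      ring

lemma iter_mem [DecidableEq A]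
    (hstd : ∀ e, ∃ c : ℝ, ∀ x ∈ Set.Ioo (G.l e) (G.r e),
      G.T x = (if e ∈ F then -x else x) + c)
    {x x' : ℝ} {w : List A} (hx : Follows G x w) (hx' : Follows G x' w)
    {t : ℕ} (ht : t < w.length) {z : ℝ} (hz : z ∈ Set.uIcc x x') :
    G.T^[t] z ∈ Set.Ioo (G.l w[t]) (G.r w[t]) := by
  obtain ⟨s, c, hs, hf⟩ := iter_affine hstd hx hx' t ht.le
  have h1 := affine_mem_uIcc (c := c) hs hz
  rw [← hf x Set.left_mem_uIcc, ← hf x' Set.right_mem_uIcc, ← hf z hz] at h1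
  exact Set.ordConnected_Ioo.uIcc_subset (hx t ht) (hx' t ht) h1

lemma follows_of_mem_uIcc [DecidableEq A]
    (hstd : ∀ e, ∃ c : ℝ, ∀ x ∈ Set.Ioo (G.l e) (G.r e),
      G.T x = (if e ∈ F then -x else x) + c)
    {x x' : ℝ} {w : List A} (hx : Follows G x w) (hx' : Follows G x' w)
    {z : ℝ} (hz : z ∈ Set.uIcc x x') : Follows G z w :=
  fun t ht => iter_mem hstd hx hx' ht hz

lemma iter_iso [DecidableEq A]
    (hstd : ∀ e, ∃ c : ℝ, ∀ x ∈ Set.Ioo (G.l e) (G.r e),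
      G.T x = (if e ∈ F then -x else x) + c)
    {x x' : ℝ} {w : List A} (hx : Follows G x w) (hx' : Follows G x' w)
    {t : ℕ} (ht : t ≤ w.length) : |G.T^[t] x - G.T^[t] x'| = |x - x'| := by
  obtain ⟨s, c, hs, hf⟩ := iter_affine hstd hx hx' t ht
  rw [hf x Set.left_mem_uIcc, hf x' Set.right_mem_uIcc]
  have h1 : s * x + c - (s * x' + c) = s * (x - x') := by ring
  rw [h1, abs_mul]
  rcases hs with rfl | rfl <;> simp

lemma orbit_iterate {u : ℤ → A} {p : ℤ → ℝ} (h : G.IsOrbit u p) (m : ℤ) (k : ℕ) :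
    G.T^[k] (p m) = p (m + k) := by
  induction k with
  | zero => simp
  | succ k ih =>
    rw [Function.iterate_succ_apply', ih, h.1]
    congr 1
    push_cast
    ring

lemma orbit_follows {u : ℤ → A} {p : ℤ → ℝ} (h : G.IsOrbit u p) (m : ℤ) (n : ℕ) :
    Follows G (p m) (win u m n) := by
  intro i hi
  rw [orbit_iterate h m i, win_getElem]
  exact h.2 (m + i)

lemma orbit_win_mem_lang {u : ℤ → A} {p : ℤ → ℝ} (h : G.IsOrbit u p) (m : ℤ) (n : ℕ) :
    win u m n ∈ G.lang := by
  refine ⟨u, p, h, m, ?_⟩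
  apply List.ext_getElem (by simp)
  intro i h1 h2
  rw [List.getElem_ofFn, win_getElem]

open MeasureTheory ENNReal in
lemma vol_uIcc (a b : ℝ) : volume (Set.uIcc a b) = ENNReal.ofReal |a - b| := by
  rw [Set.uIcc, Real.volume_Icc]
  rcases le_total a b with h | h
  · rw [abs_of_nonpos (by linarith), max_eq_right h, min_eq_left h]; ring_nf
  · rw [abs_of_nonneg (by linarith), max_eq_left h, min_eq_right h]

open MeasureTheory ENNReal in
lemma disjoint_family_bound {ρ : ℝ} (hρ : 0 < ρ) {N : ℕ} (hN : 1 < (N : ℝ) * ρ)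
    (f g : ℕ → ℝ)
    (hlen : ∀ t < N, ρ ≤ |f t - g t|)
    (hsub : ∀ t < N, Set.uIcc (f t) (g t) ⊆ Set.Ioo (0 : ℝ) 1)
    (hdisj : ∀ s < N, ∀ t < N, s ≠ t →
      Disjoint (Set.uIcc (f s) (g s)) (Set.uIcc (f t) (g t))) : False := by
  have h1 : (N : ℝ≥0∞) * ENNReal.ofReal ρ ≤
      volume (⋃ t ∈ Finset.range N, Set.uIcc (f t) (g t)) := by
    rw [measure_biUnion_finset
      (fun s hs t ht hst => hdisj s (Finset.mem_range.mp hs) t (Finset.mem_range.mp ht) hst)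
      (fun t _ => measurableSet_uIcc)]
    calc (N : ℝ≥0∞) * ENNReal.ofReal ρ
        = ∑ _t ∈ Finset.range N, ENNReal.ofReal ρ := by
          simp [Finset.sum_const, mul_comm]
      _ ≤ ∑ t ∈ Finset.range N, volume (Set.uIcc (f t) (g t)) := by
          refine Finset.sum_le_sum fun t ht => ?_
          rw [vol_uIcc]
          exact ENNReal.ofReal_le_ofReal (hlen t (Finset.mem_range.mp ht))
  have h2 : volume (⋃ t ∈ Finset.range N, Set.uIcc (f t) (g t)) ≤ volume (Set.Ioo (0:ℝ) 1) :=
    measure_mono (Set.iUnion₂_subset fun t ht => hsub t (Finset.mem_range.mp ht))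
  have h3 : (N : ℝ≥0∞) * ENNReal.ofReal ρ ≤ 1 := by
    refine le_trans (le_trans h1 h2) ?_
    rw [Real.volume_Ioo]
    simp
  rw [← ENNReal.ofReal_natCast, ← ENNReal.ofReal_mul (by positivity), ← ENNReal.ofReal_one,
    ENNReal.ofReal_le_ofReal_iff (by norm_num)] at h3
  linarith

/-- Union of the defining intervals. -/
def GIET.U (G : GIET A F) : Set ℝ := ⋃ e, Set.Ioo (G.l e) (G.r e)

/-- Union of the image intervals. -/
def GIET.U' (G : GIET A F) : Set ℝ := ⋃ e, Set.Ioo (G.l' e) (G.r' e)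

lemma GIET.U_subset (G : GIET A F) : G.U ⊆ Set.Ioo (0:ℝ) 1 :=
  Set.iUnion_subset fun e => G.sub e

lemma GIET.Ioo'_subset_Icc (G : GIET A F) (e : A) :
    Set.Ioo (G.l' e) (G.r' e) ⊆ Set.Icc (0:ℝ) 1 := by
  intro x hx
  rw [G.cover']
  exact Set.mem_iUnion.2 ⟨e, Set.Ioo_subset_Icc_self hx⟩

open scoped Classical in
/-- A chosen one-sided inverse of `T`. -/
noncomputable def GIET.ginv (G : GIET A F) (x : ℝ) : ℝ :=
  if h : ∃ z ∈ G.U, G.T z = x then h.choose else 0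

lemma GIET.ginv_spec (G : GIET A F) {x : ℝ} (hx : x ∈ G.U') :
    G.ginv x ∈ G.U ∧ G.T (G.ginv x) = x := by
  obtain ⟨e, he⟩ := Set.mem_iUnion.mp hx
  have hex : ∃ z ∈ G.U, G.T z = x := by
    have h2 : x ∈ G.T '' Set.Ioo (G.l e) (G.r e) := by rw [G.img e]; exact he
    obtain ⟨z, hz, hzx⟩ := h2
    exact ⟨z, Set.mem_iUnion.2 ⟨e, hz⟩, hzx⟩
  classical
  rw [GIET.ginv]
  rw [dif_pos hex]
  exact ⟨hex.choose_spec.1, hex.choose_spec.2⟩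

/-- Points with full forward and backward itineraries. -/
def GIET.goodSet (G : GIET A F) : Set ℝ :=
  {x | (∀ k : ℕ, G.T^[k] x ∈ G.U) ∧ (∀ k : ℕ, G.ginv^[k] x ∈ G.U')}

lemma GIET.E_finite [Fintype A] (G : GIET A F) : (Set.Icc (0:ℝ) 1 \ G.U).Finite := by
  apply Set.Finite.subset (Set.finite_iUnion
    (fun e : A => (Set.finite_singleton (G.l e)).union (Set.finite_singleton (G.r e))))
  rintro x ⟨hx, hxU⟩
  rw [G.cover] at hx
  obtain ⟨e, he⟩ := Set.mem_iUnion.mp hx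
  have hnI : x ∉ Set.Ioo (G.l e) (G.r e) := fun h => hxU (Set.mem_iUnion.2 ⟨e, h⟩)
  refine Set.mem_iUnion.2 ⟨e, ?_⟩
  simp only [Set.mem_union, Set.mem_singleton_iff]
  rcases eq_or_lt_of_le he.1 with h | h
  · exact Or.inl h.symm
  · rcases eq_or_lt_of_le he.2 with h2 | h2
    · exact Or.inr h2
    · exact absurd ⟨h, h2⟩ hnI

lemma GIET.E'_finite [Fintype A] (G : GIET A F) : (Set.Icc (0:ℝ) 1 \ G.U').Finite := by
  apply Set.Finite.subset (Set.finite_iUnion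
    (fun e : A => (Set.finite_singleton (G.l' e)).union (Set.finite_singleton (G.r' e))))
  rintro x ⟨hx, hxU⟩
  rw [G.cover'] at hx
  obtain ⟨e, he⟩ := Set.mem_iUnion.mp hx
  have hnI : x ∉ Set.Ioo (G.l' e) (G.r' e) := fun h => hxU (Set.mem_iUnion.2 ⟨e, h⟩)
  refine Set.mem_iUnion.2 ⟨e, ?_⟩
  simp only [Set.mem_union, Set.mem_singleton_iff]
  rcases eq_or_lt_of_le he.1 with h | h
  · exact Or.inl h.symm
  · rcases eq_or_lt_of_le he.2 with h2 | h2
    · exact Or.inr h2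
    · exact absurd ⟨h, h2⟩ hnI

lemma GIET.injOn_Ioo (G : GIET A F) (e : A) :
    Set.InjOn G.T (Set.Ioo (G.l e) (G.r e)) := by
  by_cases he : e ∈ F
  · exact (G.dec e he).injOn
  · exact (G.inc e he).injOn

lemma badF_finite [Fintype A] (G : GIET A F) :
    ∀ k : ℕ, {x ∈ Set.Icc (0:ℝ) 1 | (∀ j < k, G.T^[j] x ∈ G.U) ∧ G.T^[k] x ∉ G.U}.Finite := by
  intro k
  induction k with
  | zero =>
    apply G.E_finite.subset
    rintro x ⟨hx, _, hx2⟩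
    exact ⟨hx, by simpa using hx2⟩
  | succ k ih =>
    have hsub : {x ∈ Set.Icc (0:ℝ) 1 | (∀ j < k + 1, G.T^[j] x ∈ G.U) ∧ G.T^[k+1] x ∉ G.U} ⊆
        ⋃ e, {x ∈ Set.Ioo (G.l e) (G.r e) |
          G.T x ∈ {y ∈ Set.Icc (0:ℝ) 1 | (∀ j < k, G.T^[j] y ∈ G.U) ∧ G.T^[k] y ∉ G.U}} := by
      rintro x ⟨hx1, hx2, hx3⟩
      have hx0 : x ∈ G.U := by simpa using hx2 0 (Nat.succ_pos k)
      obtain ⟨e, he⟩ := Set.mem_iUnion.mp hx0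
      refine Set.mem_iUnion.2 ⟨e, he, ?_, ?_, ?_⟩
      · have : G.T x ∈ Set.Ioo (G.l' e) (G.r' e) := by
          rw [← G.img e]; exact Set.mem_image_of_mem _ he
        exact G.Ioo'_subset_Icc e this
      · intro j hj
        have := hx2 (j + 1) (by omega)
        rwa [Function.iterate_succ_apply] at this
      · intro hc
        exact hx3 (by rwa [Function.iterate_succ_apply])
    apply Set.Finite.subset _ hsub
    apply Set.finite_iUnion
    intro e
    apply Set.Finite.of_finite_image (f := G.T)
    · apply ih.subset
      rintro _ ⟨x, ⟨_, hx⟩, rfl⟩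
      exact hx
    · exact (G.injOn_Ioo e).mono (fun x hx => hx.1)

lemma badB_finite [Fintype A] (G : GIET A F) :
    ∀ k : ℕ, {x ∈ Set.Icc (0:ℝ) 1 |
      (∀ j < k, G.ginv^[j] x ∈ G.U') ∧ G.ginv^[k] x ∉ G.U'}.Finite := by
  intro k
  induction k with
  | zero =>
    apply G.E'_finite.subset
    rintro x ⟨hx, _, hx2⟩
    exact ⟨hx, by simpa using hx2⟩
  | succ k ih =>
    have hsub : {x ∈ Set.Icc (0:ℝ) 1 |
        (∀ j < k + 1, G.ginv^[j] x ∈ G.U') ∧ G.ginv^[k+1] x ∉ G.U'} ⊆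
        G.T '' {y ∈ Set.Icc (0:ℝ) 1 | (∀ j < k, G.ginv^[j] y ∈ G.U') ∧ G.ginv^[k] y ∉ G.U'} := by
      rintro x ⟨hx1, hx2, hx3⟩
      have hx0 : x ∈ G.U' := by simpa using hx2 0 (Nat.succ_pos k)
      obtain ⟨hzU, hzT⟩ := G.ginv_spec hx0
      refine ⟨G.ginv x, ⟨?_, ?_, ?_⟩, hzT⟩
      · exact Set.Ioo_subset_Icc_self (G.U_subset hzU)
      · intro j hj
        rw [← Function.iterate_succ_apply]
        exact hx2 (j + 1) (by omega)
      · intro hc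
        rw [← Function.iterate_succ_apply] at hc
        exact hx3 hc
    exact (ih.image G.T).subset hsub

lemma GIET.bad_countable [Fintype A] (G : GIET A F) :
    (Set.Icc (0:ℝ) 1 \ G.goodSet).Countable := by
  classical
  have hsub : Set.Icc (0:ℝ) 1 \ G.goodSet ⊆
      (⋃ k, {x ∈ Set.Icc (0:ℝ) 1 | (∀ j < k, G.T^[j] x ∈ G.U) ∧ G.T^[k] x ∉ G.U}) ∪
      (⋃ k, {x ∈ Set.Icc (0:ℝ) 1 |
        (∀ j < k, G.ginv^[j] x ∈ G.U') ∧ G.ginv^[k] x ∉ G.U'}) := by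
    rintro x ⟨hx, hxg⟩
    rw [GIET.goodSet, Set.mem_setOf_eq] at hxg
    rcases not_and_or.mp hxg with h | h
    · push_neg at h
      left
      have hk := Nat.find_spec h
      refine Set.mem_iUnion.2 ⟨Nat.find h, hx, ?_, hk⟩
      intro j hj
      exact not_not.mp (Nat.find_min h hj)
    · push_neg at h
      right
      have hk := Nat.find_spec h
      refine Set.mem_iUnion.2 ⟨Nat.find h, hx, ?_, hk⟩
      intro j hj
      exact not_not.mp (Nat.find_min h hj)
  refine Set.Countable.mono hsub (Set.Countable.union ?_ ?_)
  · exact Set.countable_iUnion fun k => (badF_finite G k).countable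
  · exact Set.countable_iUnion fun k => (badB_finite G k).countable

/-- The bi-infinite orbit through a good point. -/
noncomputable def GIET.gp (G : GIET A F) (x : ℝ) (n : ℤ) : ℝ :=
  if 0 ≤ n then G.T^[n.toNat] x else G.ginv^[(-n).toNat] x

lemma GIET.good_orbit (G : GIET A F) {x : ℝ} (hx : x ∈ G.goodSet) :
    ∃ u : ℤ → A, G.IsOrbit u (G.gp x) ∧ G.gp x 0 = x := by
  obtain ⟨hF, hB⟩ := hx
  have hall : ∀ n : ℤ, G.gp x n ∈ G.U := by
    intro n
    by_cases hn : 0 ≤ n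
    · rw [GIET.gp, if_pos hn]
      exact hF _
    · rw [GIET.gp, if_neg hn]
      have hk : (-n).toNat = ((-n).toNat - 1) + 1 := by omega
      rw [hk, Function.iterate_succ_apply']
      exact (G.ginv_spec (hB _)).1
  choose u hu using fun n => Set.mem_iUnion.mp (hall n)
  refine ⟨u, ⟨?_, hu⟩, by simp [GIET.gp]⟩
  intro n
  by_cases hn : 0 ≤ n
  · rw [GIET.gp, if_pos hn, GIET.gp, if_pos (by omega : (0:ℤ) ≤ n + 1)]
    rw [show (n + 1).toNat = n.toNat + 1 by omega, Function.iterate_succ_apply']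
  · by_cases hn1 : 0 ≤ n + 1
    · have hn0 : n = -1 := by omega
      subst hn0
      rw [GIET.gp, if_neg hn, GIET.gp, if_pos hn1]
      norm_num
      exact (G.ginv_spec (hB 0)).2
    · rw [GIET.gp, if_neg hn, GIET.gp, if_neg hn1]
      have hk : (-n).toNat = (-(n+1)).toNat + 1 := by omega
      rw [hk, Function.iterate_succ_apply']
      exact (G.ginv_spec (hB _)).2

lemma shrink [DecidableEq A] (G : GIET A F)
    (hstd : ∀ e, ∃ c : ℝ, ∀ x ∈ Set.Ioo (G.l e) (G.r e),
      G.T x = (if e ∈ F then -x else x) + c)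
    {L : Set (List A)} (hap : LangAperiodic L) (hcode : G.lang = L)
    {u : ℤ → A} {p : ℤ → ℝ} (horb : G.IsOrbit u p) {ρ : ℝ} (hρ : 0 < ρ) :
    ∃ n : ℕ, ∀ z z' : ℝ, Follows G z (win u 0 n) → Follows G z' (win u 0 n) →
      |z - z'| < ρ := by
  by_contra hcon
  push_neg at hcon
  set N : ℕ := ⌈1/ρ⌉₊ + 1 with hNdef
  have hN : 1 < (N : ℝ) * ρ := by
    have h1 : 1/ρ < (N : ℝ) := by
      calc 1/ρ ≤ (⌈1/ρ⌉₊ : ℝ) := Nat.le_ceil _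
        _ < (N : ℝ) := by rw [hNdef]; push_cast; linarith
    calc (1:ℝ) = (1/ρ) * ρ := by field_simp
      _ < (N:ℝ) * ρ := mul_lt_mul_of_pos_right h1 hρ
  have stepA : ∀ k : ℕ, ∃ s t : ℕ, s < t ∧ t < N ∧
      ∀ j ≤ k, u ((s + j : ℕ) : ℤ) = u ((t + j : ℕ) : ℤ) := by
    intro k
    set n : ℕ := N + k + 1 with hndef
    obtain ⟨z, z', hz, hz', hdist⟩ := hcon n
    have hnotdisj : ¬ (∀ s < N, ∀ t < N, s ≠ t →
        Disjoint (Set.uIcc (G.T^[s] z) (G.T^[s] z'))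
          (Set.uIcc (G.T^[t] z) (G.T^[t] z'))) := by
      intro hdisj
      refine disjoint_family_bound hρ hN _ _ ?_ ?_ hdisj
      · intro t ht
        rw [iter_iso hstd hz hz' (by simp only [win_length]; omega : t ≤ (win u 0 n).length)]
        exact hdist
      · intro t ht
        have h1 := hz t (by simp only [win_length]; omega)
        have h2 := hz' t (by simp only [win_length]; omega)
        exact (Set.ordConnected_Ioo.uIcc_subset h1 h2).trans (G.sub _)
    push_neg at hnotdisj
    obtain ⟨s, hsN, t, htN, hst, hnd⟩ := hnotdisj
    have core : ∀ s t : ℕ, s < t → t < N →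
        ¬ Disjoint (Set.uIcc (G.T^[s] z) (G.T^[s] z'))
          (Set.uIcc (G.T^[t] z) (G.T^[t] z')) →
        ∃ s' t' : ℕ, s' < t' ∧ t' < N ∧
          ∀ j ≤ k, u ((s' + j : ℕ) : ℤ) = u ((t' + j : ℕ) : ℤ) := by
      clear hnd hst htN hsN
      intro s t hlt htN hnd
      obtain ⟨cpt, hcs, hct⟩ := Set.not_disjoint_iff.mp hnd
      have hsn : s ≤ (win u 0 n).length := by simp only [win_length]; omega
      have htn : t ≤ (win u 0 n).length := by simp only [win_length]; omega
      obtain ⟨s1, c1, hs1, hf1⟩ := iter_affine hstd hz hz' s hsn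
      obtain ⟨s2, c2, hs2, hf2⟩ := iter_affine hstd hz hz' t htn
      rw [hf1 z Set.left_mem_uIcc, hf1 z' Set.right_mem_uIcc] at hcs
      rw [hf2 z Set.left_mem_uIcc, hf2 z' Set.right_mem_uIcc] at hct
      obtain ⟨zz, hzz, hzzc⟩ := affine_surj hs1 hcs
      obtain ⟨zz', hzz', hzzc'⟩ := affine_surj hs2 hct
      have hfz : Follows G zz (win u 0 n) := follows_of_mem_uIcc hstd hz hz' hzz
      have hfz' : Follows G zz' (win u 0 n) := follows_of_mem_uIcc hstd hz hz' hzz'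
      have hiter : G.T^[s] zz = G.T^[t] zz' := by
        rw [hf1 zz hzz, hzzc, hf2 zz' hzz', hzzc']
      refine ⟨s, t, hlt, htN, ?_⟩
      intro j hj
      have h1 : G.T^[s + j] zz = G.T^[t + j] zz' := by
        rw [add_comm s j, add_comm t j, Function.iterate_add_apply,
          Function.iterate_add_apply, hiter]
      have m1 := hfz (s + j) (by simp only [win_length]; omega)
      have m2 := hfz' (t + j) (by simp only [win_length]; omega)
      rw [win_getElem] at m1 m2
      rw [h1] at m1
      simp only [zero_add] at m1 m2
      by_contra hne
      exact Set.disjoint_left.mp (G.disj _ _ hne) m1 m2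
    rcases lt_or_gt_of_ne hst with h | h
    · exact core s t h htN hnd
    · exact core t s h hsN (fun hd => hnd hd.symm)
  have stepB : ∃ s t : ℕ, s < t ∧
      ∀ j : ℕ, u ((s + j : ℕ) : ℤ) = u ((t + j : ℕ) : ℤ) := by
    by_contra hB
    push_neg at hB
    choose Jf hJf using hB
    set k : ℕ := (Finset.range N ×ˢ Finset.range N).sup
      (fun q => if h : q.1 < q.2 then Jf q.1 q.2 h else 0) with hkdef
    obtain ⟨s, t, hst, htN, hall⟩ := stepA k
    have hmem : (s, t) ∈ Finset.range N ×ˢ Finset.range N := by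
      simp only [Finset.mem_product, Finset.mem_range]
      omega
    have hle : Jf s t hst ≤ k := by
      have h2 := Finset.le_sup
        (f := fun q : ℕ × ℕ => if h : q.1 < q.2 then Jf q.1 q.2 h else 0) hmem
      simpa [hst] using h2
    exact hJf s t hst (hall _ hle)
  obtain ⟨s, t, hst, hper⟩ := stepB
  set d : ℕ := t - s with hddef
  have hper' : ∀ j : ℕ, u ((s : ℤ) + d + j) = u ((s : ℤ) + j) := by
    intro j
    have h1 := hper j
    have e1 : ((s : ℤ) + d + j) = ((t + j : ℕ) : ℤ) := by push_cast; omega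
    have e2 : ((s : ℤ) + j) = ((s + j : ℕ) : ℤ) := by push_cast; ring
    rw [e1, e2]
    exact h1.symm
  have hpow := win_pow u s d hper'
  have hmemL : win u (s : ℤ) d ∈ L := hcode ▸ orbit_win_mem_lang horb s d
  have hneL : win u (s : ℤ) d ≠ [] := by
    intro h
    have h2 := win_length u (s : ℤ) d
    rw [h] at h2
    simp at h2
    omega
  obtain ⟨kk, hkk⟩ := hap _ hmemL hneL
  exact hkk ((hpow kk) ▸ (hcode ▸ orbit_win_mem_lang horb (s : ℤ) (kk * d)))

/-- if an aperiodic, uniformly recurrent language `L` satisfying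
an `F`-flipped order condition is the natural coding of a standard `F`-flipped
interval exchange transformation `T`, then `T` is minimal: every bi-infinite
orbit is dense in `(0,1)`. -/
theorem stmt18 [Fintype A] [DecidableEq A] (F : Finset A) (G : GIET A F)
    (hstd : ∀ e, ∃ c : ℝ, ∀ x ∈ Set.Ioo (G.l e) (G.r e),
      G.T x = (if e ∈ F then -x else x) + c)
    (L : Set (List A)) (hL : IsLanguage L)
    (hap : LangAperiodic L) (hur : UniformlyRecurrent L)
    (rA rD : A → A → Prop)
    (hA : IsStrictTotalOrder A rA) (hD : IsStrictTotalOrder A rD)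
    (hoc : FlippedOC L F rA rD)
    (hcode : G.lang = L) :
    ∀ p : ℤ → ℝ, (∀ n : ℤ, G.T (p n) = p (n + 1)) →
      (∀ n : ℤ, ∃ e, p n ∈ Set.Ioo (G.l e) (G.r e)) →
      ∀ y ∈ Set.Ioo (0 : ℝ) 1, y ∈ closure (Set.range p) := by
  intro p hT hpmem y hy
  choose u hu using hpmem
  have horb : G.IsOrbit u p := ⟨hT, hu⟩
  rw [Metric.mem_closure_iff]
  intro ε hε
  set δ : ℝ := min (ε/2) (min y (1 - y)) with hδdef
  have hδpos : 0 < δ := lt_min (by linarith) (lt_min hy.1 (by linarith [hy.2]))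
  have hδa : δ ≤ ε/2 := min_le_left _ _
  have hδb : δ ≤ y := le_trans (min_le_right _ _) (min_le_left _ _)
  have hδc : δ ≤ 1 - y := le_trans (min_le_right _ _) (min_le_right _ _)
  obtain ⟨x, hxI, hxg⟩ : ∃ x ∈ Set.Ioo (y - δ) (y + δ), x ∈ G.goodSet := by
    by_contra hc
    push_neg at hc
    have hsub2 : Set.Ioo (y - δ) (y + δ) ⊆ Set.Icc (0:ℝ) 1 \ G.goodSet := by
      intro z hz
      exact ⟨⟨by linarith [hz.1], by linarith [hz.2]⟩, hc z hz⟩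
    have hcnt := G.bad_countable.mono hsub2
    have hvol := hcnt.measure_zero MeasureTheory.volume
    rw [Real.volume_Ioo, ENNReal.ofReal_eq_zero] at hvol
    linarith
  obtain ⟨ux, horbx, hx0⟩ := G.good_orbit hxg
  obtain ⟨n, hn⟩ := shrink G hstd hap hcode horbx (half_pos hε)
  have hwL : win ux 0 n ∈ L := hcode ▸ orbit_win_mem_lang horbx 0 n
  obtain ⟨n₂, hn₂⟩ := hur _ hwL
  have hw2 : win u 0 n₂ ∈ L := hcode ▸ orbit_win_mem_lang horb 0 n₂
  have hinf : win ux 0 n <:+: win u 0 n₂ := hn₂ _ hw2 (win_length u 0 n₂)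
  obtain ⟨s₀, hs₀⟩ := win_infix hinf
  rw [win_length] at hs₀
  have hfp : Follows G (p (0 + s₀)) (win ux 0 n) := by
    rw [hs₀]
    exact orbit_follows horb (0 + s₀) n
  have hfx : Follows G x (win ux 0 n) := by
    have h3 := orbit_follows horbx 0 n
    rwa [hx0] at h3
  have hclose := hn _ _ hfx hfp
  refine ⟨p (0 + s₀), Set.mem_range_self _, ?_⟩
  rw [Real.dist_eq]
  have htri := abs_sub_le y x (p (0 + s₀))
  have hyx : |y - x| < δ := by
    rw [abs_sub_lt_iff]
    exact ⟨by linarith [hxI.1], by linarith [hxI.2]⟩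
  linarith [hclose, htri]
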